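/- For any subequation F ⊆ Sym²(ℝⁿ), the double dual equals F: (F̃)~ = F. -/

import Mathlib

open Topology Pointwise

abbrev SymMat (n : ℕ) : Type := selfAdjoint (Matrix (Fin n) (Fin n) ℝ)

def PSD (n : ℕ) : Set (SymMat n) := {A | (A : Matrix (Fin n) (Fin n) ℝ).PosSemidef}

def dual {n : ℕ} (F : Set (SymMat n)) : Set (SymMat n) := {A | -A ∉ interior F}

lemma psd_aux (n : ℕ) (ε δ : ℝ) (hδ : 0 ≤ δ) (hδn : δ * n ≤ ε)
    (E : Matrix (Fin n) (Fin n) ℝ) (hE : E.IsHermitian) (hEb : ∀ i j, |E i j| ≤ δ) :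
    (ε • 1 + E).PosSemidef := by
  refine Matrix.PosSemidef.of_dotProduct_mulVec_nonneg ?_ ?_
  · exact Matrix.IsHermitian.add (by simp [Matrix.IsHermitian, Matrix.conjTranspose_smul]) hE
  · intro x
    have hstar : star x = x := by funext i; simp
    have h1 : (ε • (1 : Matrix (Fin n) (Fin n) ℝ) + E).mulVec x = ε • x + E.mulVec x := by
      rw [Matrix.add_mulVec, Matrix.smul_mulVec, Matrix.one_mulVec]
    have hquad : dotProduct (star x) ((ε • 1 + E).mulVec x)
        = ε * (∑ i, x i ^ 2) + ∑ i, ∑ j, x i * (E i j * x j) := by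
      rw [hstar, h1, dotProduct_add, dotProduct_smul]
      congr 1
      · simp [dotProduct, sq, smul_eq_mul, Finset.mul_sum]
      · simp [dotProduct, Matrix.mulVec, Finset.mul_sum]
    have habs : |∑ i, ∑ j, x i * (E i j * x j)| ≤ δ * (∑ i, |x i|) ^ 2 := by
      calc |∑ i, ∑ j, x i * (E i j * x j)| ≤ ∑ i, ∑ j, |x i| * (δ * |x j|) := by
            refine (Finset.abs_sum_le_sum_abs _ _).trans (Finset.sum_le_sum fun i _ => ?_)
            refine (Finset.abs_sum_le_sum_abs _ _).trans (Finset.sum_le_sum fun j _ => ?_)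
            rw [abs_mul, abs_mul]
            exact mul_le_mul_of_nonneg_left
              (mul_le_mul_of_nonneg_right (hEb i j) (abs_nonneg _)) (abs_nonneg _)
        _ = δ * (∑ i, |x i|) ^ 2 := by
            simp only [← Finset.mul_sum, ← Finset.sum_mul]
            ring
    have hsq : (∑ i, |x i|) ^ 2 ≤ (n : ℝ) * ∑ i, x i ^ 2 := by
      have := sq_sum_le_card_mul_sum_sq (s := (Finset.univ : Finset (Fin n)))
        (f := fun i => |x i|)
      simpa [sq_abs] using this
    have hS : (0:ℝ) ≤ ∑ i, x i ^ 2 := Finset.sum_nonneg fun i _ => sq_nonneg _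
    rw [hquad]
    have h2 : -(δ * (∑ i, |x i|) ^ 2) ≤ ∑ i, ∑ j, x i * (E i j * x j) :=
      neg_le_of_abs_le habs
    nlinarith [mul_le_mul_of_nonneg_left hsq hδ]

lemma mem_int (n : ℕ) (F : Set (SymMat n)) (hpos : F + PSD n ⊆ F)
    (A : SymMat n) (hA : A ∈ F) (ε : ℝ) (hε : 0 < ε) :
    A + ε • 1 ∈ interior F := by
  set δ : ℝ := ε / (n + 1) with hδdef
  have hδ : 0 < δ := by positivity
  set C : SymMat n := A + ε • 1 with hC
  set O : Set (SymMat n) :=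
    ⋂ i, ⋂ j, (fun B : SymMat n => (B : Matrix (Fin n) (Fin n) ℝ) i j) ⁻¹'
      Metric.ball ((C : Matrix (Fin n) (Fin n) ℝ) i j) δ with hO
  have hopen : IsOpen O := by
    refine isOpen_iInter_of_finite fun i => isOpen_iInter_of_finite fun j => ?_
    exact Metric.isOpen_ball.preimage (Continuous.matrix_elem continuous_subtype_val i j)
  have hmemC : C ∈ O := by
    simp only [hO, Set.mem_iInter, Set.mem_preimage, Metric.mem_ball, dist_self]
    exact fun i j => hδ
  have hsub : O ⊆ F := by
    intro B hB
    have hEb : ∀ i j, |((B : Matrix (Fin n) (Fin n) ℝ) - C) i j| ≤ δ := by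
      intro i j
      have := Set.mem_iInter.mp (Set.mem_iInter.mp hB i) j
      simp only [Set.mem_preimage, Metric.mem_ball, Real.dist_eq] at this
      exact le_of_lt (by simpa [Matrix.sub_apply] using this)
    have hherm : ((B : Matrix (Fin n) (Fin n) ℝ) - C).IsHermitian := B.2.sub C.2
    have hpsd : (ε • 1 + ((B : Matrix (Fin n) (Fin n) ℝ) - C)).PosSemidef := by
      refine psd_aux n ε δ hδ.le ?_ _ hherm hEb
      rw [hδdef, div_mul_eq_mul_div, div_le_iff₀ (by positivity)]
      nlinarith [hε.le, (Nat.cast_nonneg n : (0:ℝ) ≤ n)]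
    have hBA : ((B - A : SymMat n) : Matrix (Fin n) (Fin n) ℝ)
        = ε • 1 + ((B : Matrix (Fin n) (Fin n) ℝ) - C) := by
      rw [hC]
      push_cast
      abel
    have hmemPSD : B - A ∈ PSD n := by
      show ((B - A : SymMat n) : Matrix (Fin n) (Fin n) ℝ).PosSemidef
      rw [hBA]; exact hpsd
    have : A + (B - A) ∈ F + PSD n := Set.add_mem_add hA hmemPSD
    simpa using hpos this
  exact mem_interior_iff_mem_nhds.mpr (Filter.mem_of_superset (hopen.mem_nhds hmemC) hsub)

lemma closure_int (n : ℕ) (F : Set (SymMat n)) (hcl : IsClosed F)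
    (hpos : F + PSD n ⊆ F) : closure (interior F) = F := by
  refine subset_antisymm (closure_minimal interior_subset hcl) fun A hA => ?_
  have cont : Continuous (fun ε : ℝ => A + ε • (1 : SymMat n)) := by
    rw [continuous_induced_rng]
    have : (Subtype.val ∘ fun ε : ℝ => A + ε • (1 : SymMat n)) =
        fun ε : ℝ => (A : Matrix (Fin n) (Fin n) ℝ) + ε • (1 : Matrix (Fin n) (Fin n) ℝ) := by
      funext ε
      simp [selfAdjoint.val_smul, selfAdjoint.val_one]
    rw [this]
    exact continuous_const.add (continuous_id.smul continuous_const)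
  have htend : Filter.Tendsto (fun ε : ℝ => A + ε • (1 : SymMat n)) (𝓝[>] (0:ℝ)) (𝓝 A) := by
    refine Filter.Tendsto.mono_left ?_ nhdsWithin_le_nhds
    simpa using cont.tendsto 0
  refine mem_closure_of_tendsto htend ?_
  filter_upwards [self_mem_nhdsWithin] with ε hε
  exact mem_int n F hpos A hA ε hε

theorem stmt2 (n : ℕ) (F : Set (SymMat n)) (hcl : IsClosed F)
    (hpos : F + PSD n ⊆ F) (hne : F.Nonempty) (hproper : F ≠ Set.univ) :
    dual (dual F) = F := by
  have hdual : dual F = (Neg.neg ⁻¹' interior F : Set (SymMat n))ᶜ := by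
    ext A; simp [dual]
  have hint : interior (dual F) = (Neg.neg ⁻¹' closure (interior F) : Set (SymMat n))ᶜ := by
    rw [hdual, interior_compl]
    congr 1
    exact ((Homeomorph.neg (SymMat n)).preimage_closure (interior F)).symm
  ext A
  show -A ∉ interior (dual F) ↔ A ∈ F
  rw [hint]
  simp only [Set.mem_compl_iff, Set.mem_preimage, not_not, neg_neg,
    closure_int n F hcl hpos]
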